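/- arXiv:2003.00008 — 4 statements merged into one kernel-verified Lean document; each statement's English description precedes it below -/
import Mathlib

section
/- Let k be a field of characteristic 0 and let A be a formal Laurent series in k((t)) with at worst a simple pole (i.e., all coefficients of t^j for j < -1 vanish). Let c denote the coefficient of t^{-1} in A. Then there exists a unit u of k[[t]] with u ≡ 1 (mod t) such that A + u'·u^{-1} = c·t^{-1}. -/
/-- The formal derivative `d/dt` of a formal Laurent series. -/
noncomputable def lderiv {k : Type*} [Field k] (x : LaurentSeries k) : LaurentSeries k where
  coeff j := ((j + 1 : ℤ) : k) * x.coeff (j + 1)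
  isPWO_support' := by
    apply Set.IsPWO.mono (x.isPWO_support.image_of_monotone
      (f := fun a : ℤ => a - 1) (fun a b h => by simpa using h))
    intro j hj
    have : x.coeff (j + 1) ≠ 0 := fun h => hj (by simp [Function.mem_support] at hj ⊢; simp [h])
    exact ⟨j + 1, this, by ring⟩

noncomputable def acoef {k : Type*} [Field k] (B : ℕ → k) : ℕ → k
  | 0 => 1
  | n + 1 => -(1 / ((n : k) + 1)) * ∑ j ∈ Finset.range (n + 1), B j * acoef B (n - j)
  decreasing_by omega

/-- The key power-series identity: `u' = -B·u` for `u = mk (acoef B)`. -/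
theorem acoef_deriv_eq {k : Type*} [Field k] [CharZero k] (B : ℕ → k) :
    (PowerSeries.mk fun n => ((n : k) + 1) * acoef B (n + 1)) =
      (-PowerSeries.mk B) * PowerSeries.mk (acoef B) := by
  ext n
  rw [PowerSeries.coeff_mk, PowerSeries.coeff_mul]
  rw [Finset.Nat.sum_antidiagonal_eq_sum_range_succ fun i j =>
    (PowerSeries.coeff i) (-PowerSeries.mk B) * (PowerSeries.coeff j) (PowerSeries.mk (acoef B))]
  simp only [map_neg, PowerSeries.coeff_mk, neg_mul, Finset.sum_neg_distrib]
  rw [acoef]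
  have hn : ((n : k) + 1) ≠ 0 := by
    exact_mod_cast (Nat.cast_ne_zero (R := k)).2 (Nat.succ_ne_zero n)
  field_simp

/-- A `𝔾ₘ`-connection of the first kind can be gauged, by a unit of `k⟦t⟧`
congruent to `1` mod `t`, into the canonical form `c·t⁻¹` where `c` is its residue. -/
theorem stmt_1 {k : Type*} [Field k] [CharZero k] (A : LaurentSeries k)
    (hA : ∀ j : ℤ, j < -1 → A.coeff j = 0) :
    ∃ u : LaurentSeries k, IsUnit u ∧ (∀ j : ℤ, j < 0 → u.coeff j = 0) ∧ u.coeff 0 = 1 ∧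
      A + lderiv u * u⁻¹ = HahnSeries.single (-1 : ℤ) (A.coeff (-1)) := by
  classical
  set B : ℕ → k := fun n => A.coeff n with hB
  set u0 : PowerSeries k := PowerSeries.mk (acoef B) with hu0
  set u : LaurentSeries k := (u0 : LaurentSeries k) with hu
  have hcoe : ∀ i : ℤ, u.coeff i =
      if i < 0 then 0 else PowerSeries.coeff i.natAbs u0 :=
    fun i => PowerSeries.coeff_coe u0 i
  have hneg : ∀ j : ℤ, j < 0 → u.coeff j = 0 := fun j hj => by
    rw [hcoe, if_pos hj]
  have h0 : u.coeff 0 = 1 := by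
    rw [hcoe]; simp [hu0, acoef]
  have hune : u ≠ 0 := fun h => by simp [h] at h0
  refine ⟨u, isUnit_iff_ne_zero.2 hune, hneg, h0, ?_⟩
  -- key: lderiv u = (single (-1) c - A) * u
  set S : LaurentSeries k := HahnSeries.single (-1 : ℤ) (A.coeff (-1)) with hS
  have hD : S - A = ((-PowerSeries.mk B : PowerSeries k) : LaurentSeries k) := by
    ext j
    rw [PowerSeries.coeff_coe]
    rcases lt_trichotomy j (-1) with h | h | h
    · rw [if_pos (by omega), HahnSeries.coeff_sub, HahnSeries.coeff_single_of_ne (by omega),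
        hA j h, sub_zero]
    · subst h
      rw [if_pos (by omega), HahnSeries.coeff_sub, HahnSeries.coeff_single_same, sub_self]
    · have hj0 : ¬ j < 0 := by omega
      rw [if_neg hj0, HahnSeries.coeff_sub, HahnSeries.coeff_single_of_ne (by omega), map_neg,
        PowerSeries.coeff_mk, zero_sub, neg_inj]
      show A.coeff j = A.coeff (j.natAbs : ℤ)
      congr 1
      exact (Int.natAbs_of_nonneg (by omega)).symm
  have hld : lderiv u = ((PowerSeries.mk fun n => ((n : k) + 1) * acoef B (n + 1) :
      PowerSeries k) : LaurentSeries k) := by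
    ext j
    show ((j + 1 : ℤ) : k) * u.coeff (j + 1) = _
    simp only [hcoe, PowerSeries.coeff_coe]
    rcases lt_trichotomy j (-1) with h | h | h
    · rw [if_pos (by omega), if_pos (by omega), mul_zero]
    · subst h
      norm_num
    · have hj0 : ¬ j < 0 := by omega
      have hj1 : ¬ j + 1 < 0 := by omega
      rw [if_neg hj0, if_neg hj1]
      simp only [hu0, PowerSeries.coeff_mk]
      have h1 : (j + 1).natAbs = j.natAbs + 1 := by omega
      rw [h1]
      congr 1
      rw [← Int.cast_natCast (R := k), Int.natAbs_of_nonneg (by omega : (0:ℤ) ≤ j)]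
      push_cast
      ring
  have key : lderiv u = (S - A) * u := by
    rw [hld, hD, hu, ← PowerSeries.coe_mul, acoef_deriv_eq]
  have huinv : u * u⁻¹ = 1 := mul_inv_cancel₀ hune
  calc A + lderiv u * u⁻¹ = A + (S - A) * u * u⁻¹ := by rw [key]
    _ = A + (S - A) * (u * u⁻¹) := by ring
    _ = S := by rw [huinv]; ring
end

section
/- Let k be a field of characteristic 0, let c ∈ k, and let x be a nonzero formal Laurent series in k((t)) satisfying t·x' = c·x. Then c is an integer (i.e., c = n·1 for some integer n) and x = a·t^n for some nonzero a ∈ k, where n is the image of c in the integers. -/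
/-- If a nonzero Laurent series satisfies `t·x' = c·x`, then `c` is an integer `n`
and `x = a·tⁿ` for some nonzero scalar `a`. -/
theorem stmt_3 {k : Type*} [Field k] [CharZero k] (c : k) (x : LaurentSeries k) (hx : x ≠ 0)
    (h : HahnSeries.single (1 : ℤ) 1 * lderiv x = c • x) :
    ∃ n : ℤ, c = (n : k) ∧ ∃ a : k, a ≠ 0 ∧ x = a • HahnSeries.single n (1 : k) := by
  have hcoeff : ∀ j : ℤ, (j : k) * x.coeff j = c * x.coeff j := by
    intro j
    have := congrArg (fun y : LaurentSeries k => y.coeff j) h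
    have hl : (HahnSeries.single (1 : ℤ) (1 : k) * lderiv x).coeff j
        = ((j : ℤ) : k) * x.coeff j := by
      have := HahnSeries.coeff_single_mul_add (r := (1:k)) (x := lderiv x)
        (a := j - 1) (b := (1:ℤ))
      have hj : (j - 1) + (1:ℤ) = j := by ring
      rw [hj] at this
      rw [this]
      simp [lderiv]
    rw [hl] at this
    simpa using this
  obtain ⟨n, hn⟩ := HahnSeries.support_nonempty_iff.mpr hx
  have hcn : c = (n : k) := by
    have := hcoeff n
    have hn' : x.coeff n ≠ 0 := hn
    field_simp at this
    exact this.symm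
  refine ⟨n, hcn, x.coeff n, hn, ?_⟩
  ext j
  by_cases hj : j = n
  · subst hj; simp
  · have := hcoeff j
    rw [hcn] at this
    have hz : ((j : k) - (n : k)) * x.coeff j = 0 := by ring_nf; linear_combination this
    have hjn : ((j : k) - (n : k)) ≠ 0 := by
      intro hc
      apply hj
      exact_mod_cast sub_eq_zero.mp hc
    have : x.coeff j = 0 := by
      rcases mul_eq_zero.mp hz with h1 | h1
      · exact absurd h1 hjn
      · exact h1
    simp [this, HahnSeries.coeff_single, hj]
end

section
/- Let k be a field of characteristic 0 and let A, B ∈ k((t)) be two Laurent series, each with at worst a simple pole, having the same coefficient of t^{-1}. Then there exists a unit u ∈ k[[t]]^× with u ≡ 1 (mod t) such that B = A + u'·u^{-1}. -/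
/-- Coefficients of the solution of `u' = c·u`, `u 0 = 1`. -/
noncomputable def gaugeCoeff {k : Type*} [Field k] (c : ℕ → k) : ℕ → k
  | 0 => 1
  | n + 1 => (∑ i ∈ Finset.range (n + 1), c i * gaugeCoeff c (n - i)) / (n + 1)
  decreasing_by exact Nat.lt_succ_of_le (Nat.sub_le n i)

lemma ofPowerSeries_coeff_neg {k : Type*} [Field k] (f : PowerSeries k) (j : ℤ) (hj : j < 0) :
    (HahnSeries.ofPowerSeries ℤ k f).coeff j = 0 := by
  rw [HahnSeries.ofPowerSeries_apply, HahnSeries.embDomain_notin_range]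
  rintro ⟨n, hn⟩
  have h2 : ((n : ℕ) : ℤ) = j := hn
  omega

/-- Two Laurent series with at worst a simple pole and the same residue are gauge
equivalent by a unit `u` of `k⟦t⟧` with `u ≡ 1 (mod t)`: `B = A + u'·u⁻¹`. -/
theorem stmt_11 {k : Type*} [Field k] [CharZero k] (A B : LaurentSeries k)
    (hA : ∀ j : ℤ, j < -1 → A.coeff j = 0)
    (hB : ∀ j : ℤ, j < -1 → B.coeff j = 0)
    (hres : A.coeff (-1) = B.coeff (-1)) :
    ∃ u : LaurentSeries k, IsUnit u ∧ (∀ j : ℤ, j < 0 → u.coeff j = 0) ∧ u.coeff 0 = 1 ∧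
      B = A + lderiv u * u⁻¹ := by
  set C : LaurentSeries k := B - A with hCdef
  have hC : ∀ j : ℤ, j < 0 → C.coeff j = 0 := by
    intro j hj
    rcases lt_or_eq_of_le (by omega : j ≤ -1) with h | h
    · simp [hCdef, HahnSeries.coeff_sub, hA j h, hB j h]
    · simp [hCdef, HahnSeries.coeff_sub, h, hres]
  set c : ℕ → k := fun n => C.coeff (n : ℤ) with hcdef
  set f : PowerSeries k := PowerSeries.mk (gaugeCoeff c) with hfdef
  set u : LaurentSeries k := HahnSeries.ofPowerSeries ℤ k f with hudef
  have huneg : ∀ j : ℤ, j < 0 → u.coeff j = 0 := fun j hj => ofPowerSeries_coeff_neg f j hj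
  have hunat : ∀ n : ℕ, u.coeff (n : ℤ) = gaugeCoeff c n := by
    intro n
    rw [hudef, HahnSeries.ofPowerSeries_apply_coeff, hfdef, PowerSeries.coeff_mk]
  have hu0 : u.coeff 0 = 1 := by
    have := hunat 0
    simpa [gaugeCoeff] using this
  have hune : u ≠ 0 := fun h => by simp [h] at hu0
  -- C as a power series
  have hCf : C = HahnSeries.ofPowerSeries ℤ k (PowerSeries.mk c) := by
    ext j
    rcases lt_or_ge j 0 with hj | hj
    · rw [hC j hj, ofPowerSeries_coeff_neg _ j hj]
    · obtain ⟨n, rfl⟩ := Int.eq_ofNat_of_zero_le hj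
      rw [HahnSeries.ofPowerSeries_apply_coeff, PowerSeries.coeff_mk]
  -- the power series ODE
  have hODE : f.derivativeFun = PowerSeries.mk c * f := by
    ext n
    rw [(show ∀ g : PowerSeries k, g.derivativeFun = PowerSeries.derivative k g from fun _ => rfl), PowerSeries.coeff_derivative, PowerSeries.coeff_mul,
      Finset.Nat.sum_antidiagonal_eq_sum_range_succ_mk]
    simp only [hfdef, PowerSeries.coeff_mk]
    have hne : ((n : k) + 1) ≠ 0 := by
      have : ((n + 1 : ℕ) : k) ≠ 0 := Nat.cast_ne_zero.mpr (Nat.succ_ne_zero n)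
      push_cast at this; exact this
    rw [show gaugeCoeff c (n + 1)
        = (∑ i ∈ Finset.range (n + 1), c i * gaugeCoeff c (n - i)) / (n + 1) by rw [gaugeCoeff]]
    field_simp
  -- lderiv u is the image of the derivative
  have hld : lderiv u = HahnSeries.ofPowerSeries ℤ k f.derivativeFun := by
    ext j
    show ((j + 1 : ℤ) : k) * u.coeff (j + 1) = _
    rcases lt_trichotomy j (-1) with hj | hj | hj
    · rw [huneg (j + 1) (by omega), ofPowerSeries_coeff_neg _ j (by omega), mul_zero]
    · subst hj
      rw [ofPowerSeries_coeff_neg _ (-1) (by omega)]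
      norm_num
    · obtain ⟨n, rfl⟩ := Int.eq_ofNat_of_zero_le (by omega : (0:ℤ) ≤ j)
      have h1 : ((n : ℤ) + 1) = ((n + 1 : ℕ) : ℤ) := by push_cast; ring
      rw [h1, hunat (n + 1), HahnSeries.ofPowerSeries_apply_coeff,
        (show ∀ g : PowerSeries k, g.derivativeFun = PowerSeries.derivative k g from fun _ => rfl), PowerSeries.coeff_derivative, hfdef, PowerSeries.coeff_mk]
      push_cast
      ring
  have hkey : lderiv u = C * u := by
    rw [hld, hODE, map_mul, hCf, hudef]
  refine ⟨u, isUnit_iff_ne_zero.mpr hune, huneg, hu0, ?_⟩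
  rw [hkey, mul_assoc, mul_inv_cancel₀ hune, mul_one, hCdef]
  ring
end

section
/- Let k be an algebraically closed field of characteristic 0 and let A = Σ_{j≥-1} A_j t^j ∈ M_n(k((t))) be a matrix Laurent series with at worst a simple pole. Then there exists x ∈ GL_n(k[[t]]) with x ≡ 1 (mod t) such that the gauge transform B = x·A·x^{-1} + x'·x^{-1} = Σ_{j≥-1} B_j t^j satisfies: B_{-1} = A_{-1}, and for every j ≥ 0 the coefficient B_j lies in the generalized eigenspace of the operator ad(A_{-1}) : M_n(k) → M_n(k), X ↦ [A_{-1}, X], with eigenvalue j+1. -/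
open Finset

section Decomp

variable {k : Type*} [Field k] {n : ℕ}

/-- Fitting decomposition: any `D` decomposes as `Y + (T - μ•1) Z` with `Y` in the
generalized `μ`-eigenspace. -/
lemma exists_decomp (T : Module.End k (Matrix (Fin n) (Fin n) k)) (μ : k)
    (D : Matrix (Fin n) (Fin n) k) :
    ∃ p : Matrix (Fin n) (Fin n) k × Matrix (Fin n) (Fin n) k,
      p.1 ∈ T.maxGenEigenspace μ ∧ D = p.1 + (T - μ • 1) p.2 := by
  set f : Module.End k (Matrix (Fin n) (Fin n) k) := T - μ • 1 with hf
  obtain ⟨N, hN⟩ := Filter.eventually_atTop.mp f.eventually_isCompl_ker_pow_range_pow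
  have h := hN (N + 1) (Nat.le_succ N)
  have htop : LinearMap.ker (f ^ (N+1)) ⊔ LinearMap.range (f ^ (N+1)) = ⊤ :=
    codisjoint_iff.mp h.codisjoint
  have hD : D ∈ LinearMap.ker (f ^ (N+1)) ⊔ LinearMap.range (f ^ (N+1)) := by
    rw [htop]; trivial
  obtain ⟨y, hy, w, hw, hyw⟩ := Submodule.mem_sup.mp hD
  obtain ⟨u, hu⟩ := hw
  refine ⟨⟨y, (f ^ N) u⟩, ?_, ?_⟩
  · exact (Module.End.mem_maxGenEigenspace T μ y).mpr ⟨N + 1, hy⟩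
  · have : (T - μ • 1) ((f ^ N) u) = w := by
      rw [← hu, ← hf, ← Module.End.mul_apply, ← pow_succ']
    simp only [this]
    exact hyw.symm.trans (congrArg (y + ·) this.symm)

variable (T : Module.End k (Matrix (Fin n) (Fin n) k)) (Ac : ℤ → Matrix (Fin n) (Fin n) k)

/-- Recursive construction of the pair `(Bₗ, X_{l+1})` of the aligned form coefficient and the
gauge coefficient. -/
noncomputable def alignAux : ℕ → Matrix (Fin n) (Fin n) k × Matrix (Fin n) (Fin n) k
  | l =>
    Classical.choose (exists_decomp T ((l + 1 : ℕ) : k)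
      (∑ i ∈ range (l + 1),
          (if i = 0 then 1 else if _h : i - 1 < l then (alignAux (i - 1)).2 else 0)
            * Ac ((l : ℤ) - (i : ℤ))
        - ∑ i ∈ range l,
          (if _h : i < l then (alignAux i).1 else 0) *
            (if l - i = 0 then 1 else
              if _h : l - i - 1 < l then (alignAux (l - i - 1)).2 else 0)))
termination_by l => l

/-- The gauge transform coefficients. -/
noncomputable def Xse (m : ℕ) : Matrix (Fin n) (Fin n) k :=
  if m = 0 then 1 else (alignAux T Ac (m - 1)).2

lemma Xse_zero : Xse T Ac 0 = 1 := rfl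

lemma alignAux_spec (l : ℕ) :
    (alignAux T Ac l).1 ∈ T.maxGenEigenspace ((l + 1 : ℕ) : k) ∧
    (∑ i ∈ range (l + 1), Xse T Ac i * Ac ((l : ℤ) - (i : ℤ))
      - ∑ i ∈ range l, (alignAux T Ac i).1 * Xse T Ac (l - i))
      = (alignAux T Ac l).1 + (T - ((l + 1 : ℕ) : k) • 1) ((alignAux T Ac l).2) := by
  have hG : alignAux T Ac l = Classical.choose (exists_decomp T ((l + 1 : ℕ) : k)
      (∑ i ∈ range (l + 1),
          (if i = 0 then 1 else if _h : i - 1 < l then (alignAux T Ac (i - 1)).2 else 0)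
            * Ac ((l : ℤ) - (i : ℤ))
        - ∑ i ∈ range l,
          (if _h : i < l then (alignAux T Ac i).1 else 0) *
            (if l - i = 0 then 1 else
              if _h : l - i - 1 < l then (alignAux T Ac (l - i - 1)).2 else 0))) := by
    rw [alignAux]
  have h1 : ∑ i ∈ range (l + 1),
      (if i = 0 then 1 else if _h : i - 1 < l then (alignAux T Ac (i - 1)).2 else 0)
        * Ac ((l : ℤ) - (i : ℤ))
      = ∑ i ∈ range (l + 1), Xse T Ac i * Ac ((l : ℤ) - (i : ℤ)) := by
    refine Finset.sum_congr rfl fun i hi => ?_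
    rw [mem_range] at hi
    rcases eq_or_ne i 0 with rfl | h0
    · simp [Xse]
    · rw [if_neg h0, dif_pos (by omega), Xse, if_neg h0]
  have h2 : ∑ i ∈ range l,
      (if _h : i < l then (alignAux T Ac i).1 else 0) *
        (if l - i = 0 then 1 else
          if _h : l - i - 1 < l then (alignAux T Ac (l - i - 1)).2 else 0)
      = ∑ i ∈ range l, (alignAux T Ac i).1 * Xse T Ac (l - i) := by
    refine Finset.sum_congr rfl fun i hi => ?_
    rw [mem_range] at hi
    rw [dif_pos hi, if_neg (by omega), dif_pos (by omega), Xse, if_neg (by omega)]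
  have h := Classical.choose_spec (exists_decomp T ((l + 1 : ℕ) : k)
      (∑ i ∈ range (l + 1),
          (if i = 0 then 1 else if _h : i - 1 < l then (alignAux T Ac (i - 1)).2 else 0)
            * Ac ((l : ℤ) - (i : ℤ))
        - ∑ i ∈ range l,
          (if _h : i < l then (alignAux T Ac i).1 else 0) *
            (if l - i = 0 then 1 else
              if _h : l - i - 1 < l then (alignAux T Ac (l - i - 1)).2 else 0)))
  rw [hG, ← h1, ← h2]
  exact h

/-- The aligned-form coefficients (of `t·B`). -/
noncomputable def bse (m : ℕ) : Matrix (Fin n) (Fin n) k :=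
  if m = 0 then Ac (-1) else (alignAux T Ac (m - 1)).1

lemma key_identity (hT : ∀ X, T X = Ac (-1) * X - X * Ac (-1)) (m : ℕ) :
    (m : k) • Xse T Ac m + ∑ uv ∈ antidiagonal m, Xse T Ac uv.1 * Ac ((uv.2 : ℤ) - 1)
      = ∑ uv ∈ antidiagonal m, bse T Ac uv.1 * Xse T Ac uv.2 := by
  rw [Finset.Nat.sum_antidiagonal_eq_sum_range_succ_mk,
    Finset.Nat.sum_antidiagonal_eq_sum_range_succ_mk]
  cases m with
  | zero => simp [Xse, bse]
  | succ l =>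
    have hX : Xse T Ac (l + 1) = (alignAux T Ac l).2 := by simp [Xse]
    have hA1 : ∑ i ∈ range (l + 2), Xse T Ac i * Ac (((l + 1 - i : ℕ) : ℤ) - 1)
        = (∑ i ∈ range (l + 1), Xse T Ac i * Ac ((l : ℤ) - (i : ℤ)))
          + (alignAux T Ac l).2 * Ac (-1) := by
      rw [Finset.sum_range_succ]
      congr 1
      · refine Finset.sum_congr rfl fun i hi => ?_
        rw [mem_range] at hi
        have h1 : ((l + 1 - i : ℕ) : ℤ) - 1 = (l : ℤ) - (i : ℤ) := by omega
        rw [h1]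
      · have h2 : ((l + 1 - (l + 1) : ℕ) : ℤ) - 1 = -1 := by omega
        rw [hX, h2]
    have hA2 : ∑ i ∈ range (l + 2), bse T Ac i * Xse T Ac (l + 1 - i)
        = (∑ i ∈ range l, (alignAux T Ac i).1 * Xse T Ac (l - i))
          + (alignAux T Ac l).1 + Ac (-1) * (alignAux T Ac l).2 := by
      rw [Finset.sum_range_succ']
      have : ∀ i ∈ range (l + 1), bse T Ac (i + 1) * Xse T Ac (l + 1 - (i + 1))
          = (alignAux T Ac i).1 * Xse T Ac (l - i) := by
        intro i hi
        simp [bse, Nat.succ_sub_succ]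
      rw [Finset.sum_congr rfl this, Finset.sum_range_succ]
      have e1 : Xse T Ac (l - l) = 1 := by simp [Xse]
      have e2 : bse T Ac 0 * Xse T Ac (l + 1 - 0) = Ac (-1) * (alignAux T Ac l).2 := by
        simp [bse, Xse]
      rw [e1, e2, mul_one]
    rw [hA1, hA2]
    have spec := (alignAux_spec T Ac l).2
    simp only [LinearMap.sub_apply, LinearMap.smul_apply, Module.End.one_apply, hT] at spec
    rw [sub_eq_iff_eq_add] at spec
    rw [spec, hX]
    push_cast
    abel

/-- Formal derivative of a power series (ad hoc). -/
noncomputable def pderiv (f : PowerSeries k) : PowerSeries k :=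
  PowerSeries.mk fun m => ((m : k) + 1) * PowerSeries.coeff (m + 1) f

lemma coeff_X_mul_pderiv (f : PowerSeries k) (m : ℕ) :
    PowerSeries.coeff m (PowerSeries.X * pderiv f) = (m : k) * PowerSeries.coeff m f := by
  cases m with
  | zero => simp [PowerSeries.coeff_zero_X_mul]
  | succ m =>
    rw [PowerSeries.coeff_succ_X_mul, pderiv, PowerSeries.coeff_mk]
    push_cast
    ring

lemma phi_coeff_neg (f : PowerSeries k) (l : ℤ) (hl : l < 0) :
    ((HahnSeries.ofPowerSeries ℤ k) f).coeff l = 0 := by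
  rw [HahnSeries.ofPowerSeries_apply]
  apply HahnSeries.embDomain_notin_range
  rintro ⟨m, hm⟩
  replace hm : ((m : ℕ) : ℤ) = l := hm
  omega

lemma single_neg_one_mul_coeff (y : LaurentSeries k) (l : ℤ) :
    ((HahnSeries.single (-1 : ℤ) (1 : k)) * y).coeff l = y.coeff (l + 1) := by
  have h := HahnSeries.coeff_single_mul_add (r := (1 : k)) (x := y) (a := l + 1) (b := (-1 : ℤ))
  simpa using h

lemma lderiv_phi (f : PowerSeries k) :
    lderiv ((HahnSeries.ofPowerSeries ℤ k) f) = (HahnSeries.ofPowerSeries ℤ k) (pderiv f) := by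
  apply HahnSeries.ext
  funext l
  show ((l + 1 : ℤ) : k) * ((HahnSeries.ofPowerSeries ℤ k) f).coeff (l + 1)
      = ((HahnSeries.ofPowerSeries ℤ k) (pderiv f)).coeff l
  by_cases hl : 0 ≤ l
  · lift l to ℕ using hl
    have h1 : (l : ℤ) + 1 = ((l + 1 : ℕ) : ℤ) := by push_cast; ring
    rw [h1, HahnSeries.ofPowerSeries_apply_coeff, HahnSeries.ofPowerSeries_apply_coeff,
      pderiv, PowerSeries.coeff_mk]
    push_cast
    ring
  · have hneg : l < 0 := by omega
    rw [phi_coeff_neg _ _ hneg]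
    by_cases h1 : l = -1
    · subst h1; norm_num
    · have : l + 1 < 0 := by omega
      rw [phi_coeff_neg _ _ this, mul_zero]

lemma phi_X_mul_rewrite (g : PowerSeries k) :
    (HahnSeries.ofPowerSeries ℤ k) g
      = (HahnSeries.single (-1 : ℤ) (1 : k)) * (HahnSeries.ofPowerSeries ℤ k) (PowerSeries.X * g) := by
  rw [map_mul, HahnSeries.ofPowerSeries_X, ← mul_assoc, HahnSeries.single_mul_single]
  norm_num

lemma coeff_mul_matrix (P Q : Matrix (Fin n) (Fin n) (PowerSeries k)) (m : ℕ) (i j : Fin n) :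
    PowerSeries.coeff m ((P * Q) i j)
      = ∑ uv ∈ antidiagonal m, ∑ p, PowerSeries.coeff uv.1 (P i p)
          * PowerSeries.coeff uv.2 (Q p j) := by
  rw [Matrix.mul_apply, map_sum]
  rw [Finset.sum_comm]
  exact Finset.sum_congr rfl fun p _ => PowerSeries.coeff_mul m (P i p) (Q p j)

/-- The gauge matrix, as a matrix of power series. -/
noncomputable def pxM : Matrix (Fin n) (Fin n) (PowerSeries k) :=
  Matrix.of fun i j => PowerSeries.mk fun m => Xse T Ac m i j

/-- `t · A`, as a matrix of power series. -/
noncomputable def paM : Matrix (Fin n) (Fin n) (PowerSeries k) :=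
  Matrix.of fun i j => PowerSeries.mk fun m => Ac ((m : ℤ) - 1) i j

/-- `t · B`, as a matrix of power series. -/
noncomputable def pbM : Matrix (Fin n) (Fin n) (PowerSeries k) :=
  Matrix.of fun i j => PowerSeries.mk fun m => bse T Ac m i j

lemma pow_identity (hT : ∀ X, T X = Ac (-1) * X - X * Ac (-1)) :
    (Matrix.of fun i j => PowerSeries.X * pderiv ((pxM T Ac) i j)) + pxM T Ac * paM Ac
      = pbM T Ac * pxM T Ac := by
  ext i j m
  rw [Matrix.add_apply, map_add, Matrix.of_apply, coeff_X_mul_pderiv,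
    coeff_mul_matrix, coeff_mul_matrix]
  have hkey := key_identity T Ac hT m
  have hkey' : ((m : k) • Xse T Ac m
        + ∑ uv ∈ antidiagonal m, Xse T Ac uv.1 * Ac ((uv.2 : ℤ) - 1)) i j
      = (∑ uv ∈ antidiagonal m, bse T Ac uv.1 * Xse T Ac uv.2) i j := by rw [hkey]
  simp only [Matrix.add_apply, Matrix.smul_apply, Matrix.sum_apply, Matrix.mul_apply,
    smul_eq_mul] at hkey'
  simpa only [pxM, paM, pbM, Matrix.of_apply, PowerSeries.coeff_mk] using hkey'

/-- Coefficient matrices of a matrix of Laurent series. -/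
noncomputable def Acf (A : Matrix (Fin n) (Fin n) (LaurentSeries k)) :
    ℤ → Matrix (Fin n) (Fin n) k :=
  fun l => Matrix.of fun i j => (A i j).coeff l

lemma A_entry_eq (A : Matrix (Fin n) (Fin n) (LaurentSeries k))
    (hA : ∀ i j : Fin n, ∀ l : ℤ, l < -1 → (A i j).coeff l = 0) (p q : Fin n) :
    A p q = (HahnSeries.single (-1 : ℤ) (1 : k))
      * (HahnSeries.ofPowerSeries ℤ k) ((paM (Acf A)) p q) := by
  apply HahnSeries.ext
  funext l
  rw [single_neg_one_mul_coeff]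
  by_cases h : 0 ≤ l + 1
  · have h1 : l + 1 = (((l + 1).toNat : ℕ) : ℤ) := (Int.toNat_of_nonneg h).symm
    rw [h1, HahnSeries.ofPowerSeries_apply_coeff]
    simp only [paM, Matrix.of_apply, PowerSeries.coeff_mk, Acf]
    have h2 : (((l + 1).toNat : ℕ) : ℤ) - 1 = l := by omega
    rw [h2]
  · have h2 : l + 1 < 0 := by omega
    rw [phi_coeff_neg _ _ h2]
    exact hA p q l (by omega)

lemma laurent_main (A : Matrix (Fin n) (Fin n) (LaurentSeries k))
    (hA : ∀ i j : Fin n, ∀ l : ℤ, l < -1 → (A i j).coeff l = 0)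
    (hT : ∀ X, T X = Acf A (-1) * X - X * Acf A (-1)) :
    ((pxM T (Acf A)).map (HahnSeries.ofPowerSeries ℤ k)).map lderiv
        + (pxM T (Acf A)).map (HahnSeries.ofPowerSeries ℤ k) * A
      = (Matrix.of fun i j => (HahnSeries.single (-1 : ℤ) (1 : k))
          * (HahnSeries.ofPowerSeries ℤ k) ((pbM T (Acf A)) i j))
        * ((pxM T (Acf A)).map (HahnSeries.ofPowerSeries ℤ k)) := by
  set P := pxM T (Acf A) with hP
  set s : LaurentSeries k := HahnSeries.single (-1 : ℤ) (1 : k) with hs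
  refine Matrix.ext fun i j => ?_
  simp only [Matrix.add_apply, Matrix.map_apply, Matrix.mul_apply, Matrix.of_apply]
  have e1 : lderiv ((HahnSeries.ofPowerSeries ℤ k) (P i j))
      = s * (HahnSeries.ofPowerSeries ℤ k) (PowerSeries.X * pderiv (P i j)) := by
    rw [lderiv_phi, phi_X_mul_rewrite]
  have e2 : ∑ p, (HahnSeries.ofPowerSeries ℤ k) (P i p) * A p j
      = s * (HahnSeries.ofPowerSeries ℤ k) ((P * paM (Acf A)) i j) := by
    rw [Matrix.mul_apply, map_sum, Finset.mul_sum]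
    refine Finset.sum_congr rfl fun p _ => ?_
    rw [A_entry_eq A hA p j, map_mul]
    ring
  rw [e1, e2, ← mul_add, ← map_add]
  have e3 : PowerSeries.X * pderiv (P i j) + (P * paM (Acf A)) i j
      = ((pbM T (Acf A)) * P) i j := by
    have := pow_identity T (Acf A) hT
    have h := congrFun (congrFun this i) j
    simpa only [Matrix.add_apply, Matrix.of_apply] using h
  rw [e3, Matrix.mul_apply, map_sum, Finset.mul_sum]
  refine Finset.sum_congr rfl fun p _ => ?_
  rw [map_mul]
  ring

lemma isUnit_xM : IsUnit ((pxM T Ac).map (HahnSeries.ofPowerSeries ℤ k)) := by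
  have hconst : PowerSeries.constantCoeff (pxM T Ac).det = 1 := by
    rw [RingHom.map_det]
    have h1 : PowerSeries.constantCoeff.mapMatrix (pxM T Ac) = 1 := by
      refine Matrix.ext fun i j => ?_
      simp only [RingHom.mapMatrix_apply, Matrix.map_apply, pxM, Matrix.of_apply]
      rw [← PowerSeries.coeff_zero_eq_constantCoeff_apply, PowerSeries.coeff_mk, Xse_zero]
    rw [h1, Matrix.det_one]
  have hdet : IsUnit (pxM T Ac).det := by
    rw [PowerSeries.isUnit_iff_constantCoeff, hconst]
    exact isUnit_one
  have hpxu : IsUnit (pxM T Ac) := (Matrix.isUnit_iff_isUnit_det _).mpr hdet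
  have heq : (pxM T Ac).map (HahnSeries.ofPowerSeries ℤ k)
      = (HahnSeries.ofPowerSeries ℤ k).mapMatrix (pxM T Ac) := rfl
  rw [heq]
  exact hpxu.map _

end Decomp

/-- Every matrix connection with at worst a simple pole can be gauged, by an element
of `GLₙ(k⟦t⟧)` congruent to `1` mod `t`, into aligned form: the residue is unchanged
and the coefficient of `tʲ` (for `j ≥ 0`) lies in the generalized eigenspace of
`ad(A₋₁)` with eigenvalue `j+1`. -/
theorem stmt_15 {k : Type*} [Field k] [CharZero k] [IsAlgClosed k] {n : ℕ}
    (A : Matrix (Fin n) (Fin n) (LaurentSeries k))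
    (hA : ∀ i j : Fin n, ∀ l : ℤ, l < -1 → (A i j).coeff l = 0) :
    ∃ x : Matrix (Fin n) (Fin n) (LaurentSeries k),
      (∀ i j : Fin n, ∀ l : ℤ, l < 0 → (x i j).coeff l = 0) ∧
      (Matrix.of fun i j => (x i j).coeff 0) = (1 : Matrix (Fin n) (Fin n) k) ∧
      IsUnit x ∧
      (∀ i j : Fin n,
        ((x * A * x⁻¹ + (x.map lderiv) * x⁻¹) i j).coeff (-1) = (A i j).coeff (-1)) ∧
      ∀ adA : Module.End k (Matrix (Fin n) (Fin n) k),
        (∀ X : Matrix (Fin n) (Fin n) k,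
          adA X = (Matrix.of fun i j => (A i j).coeff (-1)) * X
                  - X * (Matrix.of fun i j => (A i j).coeff (-1))) →
        ∀ l : ℤ, 0 ≤ l →
          (Matrix.of fun i j => ((x * A * x⁻¹ + (x.map lderiv) * x⁻¹) i j).coeff l)
            ∈ adA.maxGenEigenspace (((l : ℤ) : k) + 1) := by
  classical
  set T : Module.End k (Matrix (Fin n) (Fin n) k) :=
    LinearMap.mulLeft k (Acf A (-1)) - LinearMap.mulRight k (Acf A (-1)) with hTdef
  have hT : ∀ X, T X = Acf A (-1) * X - X * Acf A (-1) := fun X => by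
    simp [hTdef, LinearMap.sub_apply, LinearMap.mulLeft_apply, LinearMap.mulRight_apply]
  set x : Matrix (Fin n) (Fin n) (LaurentSeries k) :=
    (pxM T (Acf A)).map (HahnSeries.ofPowerSeries ℤ k) with hxdef
  set Bm : Matrix (Fin n) (Fin n) (LaurentSeries k) := Matrix.of fun i j =>
    (HahnSeries.single (-1 : ℤ) (1 : k))
      * (HahnSeries.ofPowerSeries ℤ k) ((pbM T (Acf A)) i j) with hBm
  have hmain : x.map lderiv + x * A = Bm * x := laurent_main T A hA hT
  have hux : IsUnit x := isUnit_xM T (Acf A)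
  have hdet : IsUnit x.det := (Matrix.isUnit_iff_isUnit_det x).mp hux
  have hgauge : x * A * x⁻¹ + x.map lderiv * x⁻¹ = Bm := by
    have h1 : x * A + x.map lderiv = Bm * x := by rw [add_comm]; exact hmain
    calc x * A * x⁻¹ + x.map lderiv * x⁻¹ = (x * A + x.map lderiv) * x⁻¹ := (add_mul _ _ _).symm
    _ = Bm * x * x⁻¹ := by rw [h1]
    _ = Bm := by rw [Matrix.mul_assoc, Matrix.mul_nonsing_inv x hdet, Matrix.mul_one]
  refine ⟨x, ?_, ?_, hux, ?_, ?_⟩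
  · intro i j l hl
    rw [hxdef, Matrix.map_apply]
    exact phi_coeff_neg _ _ hl
  · refine Matrix.ext fun i j => ?_
    rw [Matrix.of_apply, hxdef, Matrix.map_apply]
    rw [show (0 : ℤ) = ((0 : ℕ) : ℤ) from rfl, HahnSeries.ofPowerSeries_apply_coeff]
    simp only [pxM, Matrix.of_apply, PowerSeries.coeff_mk, Xse_zero]
  · intro i j
    rw [hgauge, hBm, Matrix.of_apply, single_neg_one_mul_coeff]
    norm_num
    rw [show (0 : ℤ) = ((0 : ℕ) : ℤ) from rfl, HahnSeries.ofPowerSeries_apply_coeff]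
    simp [pbM, bse, Acf]
  · intro adA hadA l hl
    have hadT : adA = T := by
      refine LinearMap.ext fun X => ?_
      rw [hadA X, hT X]
      rfl
    rw [hadT]
    simp only [hgauge]
    lift l to ℕ using hl
    have hBml : (Matrix.of fun i j => (Bm i j).coeff (l : ℤ)) = (alignAux T (Acf A) l).1 := by
      refine Matrix.ext fun i j => ?_
      rw [Matrix.of_apply, hBm, Matrix.of_apply, single_neg_one_mul_coeff]
      have h1 : (l : ℤ) + 1 = ((l + 1 : ℕ) : ℤ) := by push_cast; ring
      rw [h1, HahnSeries.ofPowerSeries_apply_coeff]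
      simp only [pbM, Matrix.of_apply, PowerSeries.coeff_mk, bse, Nat.succ_ne_zero, if_false,
        Nat.add_sub_cancel]
    rw [hBml]
    have h2 : (((l : ℕ) : ℤ) : k) + 1 = ((l + 1 : ℕ) : k) := by push_cast; ring
    rw [h2]
    exact (alignAux_spec T (Acf A) l).1
end
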